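/- Let n, k be integers with 0 ≤ k ≤ n/2 and let J be the ideal of ℚ[x_1,...,x_n] described below. Then the quotient ring ℚ[x_1,...,x_n]/J is spanned as a ℚ-vector space by the residue classes of the squarefree monomials x_S := ∏_{j∈S} x_j, where S ranges over all subsets of {1,...,n} of cardinality ℓ with 0 ≤ ℓ ≤ k whose m-th smallest element is at least 2m for every 1 ≤ m ≤ ℓ (for S = ∅ the monomial is 1). -/

import Mathlib

open scoped BigOperators

/-- The variable `xᵢ` (for `1 ≤ i ≤ n`) of `ℚ[x₁,…,xₙ] = MvPolynomial (Fin n) ℚ`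
(out-of-range indices give `0`). -/
noncomputable def yP (n : ℕ) (i : ℕ) : MvPolynomial (Fin n) ℚ :=
  if h : 1 ≤ i ∧ i ≤ n then MvPolynomial.X ⟨i - 1, by omega⟩ else 0

/-- The ideal `J` of `ℚ[x₁,…,xₙ]` generated by
(i) `∑ᵢ xᵢ`; (ii) `xᵢ²` for `1 ≤ i ≤ n`;
(iii) `x_{i₁}⋯x_{i_{k+1}}` for all `1 ≤ i₁ < ⋯ < i_{k+1} ≤ n`. -/
noncomputable def Jid (n k : ℕ) : Ideal (MvPolynomial (Fin n) ℚ) :=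
  Ideal.span
    ({∑ i ∈ Finset.Icc 1 n, yP n i} ∪
      {p | ∃ i, 1 ≤ i ∧ i ≤ n ∧ p = (yP n i) ^ 2} ∪
      {p | ∃ m : Fin (k + 1) → ℕ, StrictMono m ∧ 1 ≤ m 0 ∧ m (Fin.last k) ≤ n ∧
        p = ∏ j : Fin (k + 1), yP n (m j)})

/-- `S` is the bottom row of a standard tableau on a two-row shape `(n-ℓ,ℓ)`
with `ℓ = S.card ≤ k`: its `m`-th smallest element is at least `2m`. -/
def goodS (n k : ℕ) (S : Finset ℕ) : Prop :=
  S ⊆ Finset.Icc 1 n ∧ S.card ≤ k ∧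
    ∀ j ∈ S, 2 * (S.filter fun a => a ≤ j).card ≤ j

lemma yP_fin (n : ℕ) (i : Fin n) : yP n ((i : ℕ) + 1) = MvPolynomial.X i := by
  have h : 1 ≤ (i : ℕ) + 1 ∧ (i : ℕ) + 1 ≤ n := ⟨Nat.le_add_left _ _, i.2⟩
  rw [yP, dif_pos h]
  rfl

lemma gen_sum_mem (n k : ℕ) : (∑ i ∈ Finset.Icc 1 n, yP n i) ∈ Jid n k :=
  Ideal.subset_span (Or.inl (Or.inl rfl))

lemma gen_sq_mem (n k i : ℕ) (h1 : 1 ≤ i) (h2 : i ≤ n) : (yP n i) ^ 2 ∈ Jid n k :=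
  Ideal.subset_span (Or.inl (Or.inr ⟨i, h1, h2, rfl⟩))

lemma gen_prod_mem (n k : ℕ) (m : Fin (k+1) → ℕ) (hm : StrictMono m) (h0 : 1 ≤ m 0)
    (hl : m (Fin.last k) ≤ n) : (∏ j : Fin (k+1), yP n (m j)) ∈ Jid n k :=
  Ideal.subset_span (Or.inr ⟨m, hm, h0, hl, rfl⟩)

/-- squarefree products of more than `k` variables are in `J` -/
lemma big_mem (n k : ℕ) (S : Finset ℕ) (hS : S ⊆ Finset.Icc 1 n) (hc : k + 1 ≤ S.card) :
    (∏ j ∈ S, yP n j) ∈ Jid n k := by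
  obtain ⟨S', hsub, hcard⟩ := Finset.exists_subset_card_eq hc
  have hprod : (∏ j ∈ S \ S', yP n j) * (∏ j ∈ S', yP n j) = ∏ j ∈ S, yP n j :=
    Finset.prod_sdiff hsub
  rw [← hprod]
  apply Ideal.mul_mem_left
  -- enumerate S' by an order isomorphism
  let e := S'.orderIsoOfFin hcard
  set m : Fin (k+1) → ℕ := fun j => (e j : ℕ) with hm
  have hmono : StrictMono m := fun a b hab => by
    have := e.strictMono hab
    exact_mod_cast this
  have hmem : ∀ j, m j ∈ S' := fun j => (e j).2
  have h0 : 1 ≤ m 0 := (Finset.mem_Icc.1 (hS (hsub (hmem 0)))).1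
  have hl : m (Fin.last k) ≤ n := (Finset.mem_Icc.1 (hS (hsub (hmem (Fin.last k))))).2
  have : (∏ j ∈ S', yP n j) = ∏ j : Fin (k+1), yP n (m j) := by
    rw [← Finset.prod_coe_sort S' (fun j => yP n j)]
    exact (Equiv.prod_comp e.toEquiv (fun x => yP n (x : ℕ))).symm
  rw [this]
  exact gen_prod_mem n k m hmono h0 hl

/-- the basic straightening relation -/
lemma rel_mem (n k : ℕ) (T : Finset ℕ) (hT : T ⊆ Finset.Icc 1 n) :
    (∑ i ∈ Finset.Icc 1 n \ T, ∏ j ∈ insert i T, yP n j) ∈ Jid n k := by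
  have h1 : (∏ j ∈ T, yP n j) * (∑ i ∈ Finset.Icc 1 n, yP n i) ∈ Jid n k :=
    Ideal.mul_mem_left _ _ (gen_sum_mem n k)
  have hsplit : (∏ j ∈ T, yP n j) * (∑ i ∈ Finset.Icc 1 n, yP n i)
      = (∑ i ∈ T, (∏ j ∈ T, yP n j) * yP n i)
        + ∑ i ∈ Finset.Icc 1 n \ T, ∏ j ∈ insert i T, yP n j := by
    rw [Finset.mul_sum, ← Finset.sum_sdiff hT]
    rw [add_comm]
    congr 1
    apply Finset.sum_congr rfl
    intro i hi
    have hiT : i ∉ T := (Finset.mem_sdiff.1 hi).2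
    rw [Finset.prod_insert hiT, mul_comm]
  have h2 : (∑ i ∈ T, (∏ j ∈ T, yP n j) * yP n i) ∈ Jid n k := by
    apply Ideal.sum_mem
    intro i hi
    have : (∏ j ∈ T, yP n j) * yP n i = (∏ j ∈ T.erase i, yP n j) * (yP n i) ^ 2 := by
      rw [← Finset.mul_prod_erase T _ hi]; ring
    rw [this]
    exact Ideal.mul_mem_left _ _
      (gen_sq_mem n k i (Finset.mem_Icc.1 (hT hi)).1 (Finset.mem_Icc.1 (hT hi)).2)
  have := Ideal.sub_mem _ h1 h2
  rwa [hsplit, add_sub_cancel_left] at this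

lemma card_filter_superset (G W : Finset ℕ) (r : ℕ) (hW : W ⊆ G) (hr : W.card ≤ r) :
    ((G.powersetCard r).filter (fun C => W ⊆ C)).card
      = (G.card - W.card).choose (r - W.card) := by
  rw [← Finset.card_sdiff_of_subset hW, ← Finset.card_powersetCard]
  apply Finset.card_bij (fun C _ => C \ W)
  · intro C hC
    simp only [Finset.mem_filter, Finset.mem_powersetCard] at hC
    obtain ⟨⟨hCG, hCc⟩, hWC⟩ := hC
    rw [Finset.mem_powersetCard]
    exact ⟨Finset.sdiff_subset_sdiff hCG (le_refl W), by rw [Finset.card_sdiff_of_subset hWC, hCc]⟩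
  · intro C1 h1 C2 h2 heq
    simp only [Finset.mem_filter, Finset.mem_powersetCard] at h1 h2
    rw [← Finset.sdiff_union_of_subset h1.2, ← Finset.sdiff_union_of_subset h2.2, heq]
  · intro D hD
    rw [Finset.mem_powersetCard] at hD
    obtain ⟨hDG, hDc⟩ := hD
    have hdisj : Disjoint D W := (Finset.subset_sdiff.1 hDG).2
    refine ⟨D ∪ W, ?_, ?_⟩
    · simp only [Finset.mem_filter, Finset.mem_powersetCard]
      refine ⟨⟨Finset.union_subset (hDG.trans (Finset.sdiff_subset)) hW, ?_⟩,
        Finset.subset_union_right⟩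
      rw [Finset.card_union_of_disjoint hdisj, hDc]
      omega
    · rw [Finset.union_sdiff_cancel_right hdisj]

lemma countN (G : Finset ℕ) (m : ℕ) (B B' : Finset ℕ)
    (hB : B ∈ G.powersetCard m) (hB' : B' ∈ G.powersetCard m) :
    ((G.powersetCard (m+1)).filter (fun C => B ⊆ C ∧ B' ⊆ C)).card
      = if B = B' then G.card - m else if (B ∪ B').card = m + 1 then 1 else 0 := by
  rw [Finset.mem_powersetCard] at hB hB'
  have hfil : ((G.powersetCard (m+1)).filter (fun C => B ⊆ C ∧ B' ⊆ C))
      = ((G.powersetCard (m+1)).filter (fun C => B ∪ B' ⊆ C)) := by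
    apply Finset.filter_congr; intro C _; simp [Finset.union_subset_iff]
  rw [hfil]
  by_cases heq : B = B'
  · subst heq
    rw [if_pos rfl, Finset.union_self,
      card_filter_superset G B (m+1) hB.1 (by omega : B.card ≤ m+1), hB.2]
    simp [Nat.choose_one_right]
  · rw [if_neg heq]
    have hle : m ≤ (B ∪ B').card := hB.2 ▸ Finset.card_le_card Finset.subset_union_left
    have hne : (B ∪ B').card ≠ m := by
      intro hc
      apply heq
      have h1 : B = B ∪ B' := Finset.eq_of_subset_of_card_le Finset.subset_union_left (by omega)
      have h2 : B' = B ∪ B' := Finset.eq_of_subset_of_card_le Finset.subset_union_right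
        (by rw [hc, hB'.2])
      rw [h1, ← h2]
    by_cases hc : (B ∪ B').card = m + 1
    · rw [if_pos hc,
        card_filter_superset G (B ∪ B') (m+1) (Finset.union_subset hB.1 hB'.1) (by omega), hc]
      simp
    · rw [if_neg hc]
      rw [Finset.card_eq_zero, Finset.filter_eq_empty_iff]
      intro C hC
      rw [Finset.mem_powersetCard] at hC
      intro hsub
      have := Finset.card_le_card hsub
      omega

lemma countM (G : Finset ℕ) (m : ℕ) (hm : 1 ≤ m) (B B' : Finset ℕ)
    (hB : B ∈ G.powersetCard m) (hB' : B' ∈ G.powersetCard m) :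
    ((G.powersetCard (m-1)).filter (fun T => T ⊆ B ∧ T ⊆ B')).card
      = if B = B' then m else if (B ∪ B').card = m + 1 then 1 else 0 := by
  rw [Finset.mem_powersetCard] at hB hB'
  have hfil : ((G.powersetCard (m-1)).filter (fun T => T ⊆ B ∧ T ⊆ B'))
      = (B ∩ B').powersetCard (m-1) := by
    ext T
    simp only [Finset.mem_filter, Finset.mem_powersetCard, Finset.subset_inter_iff]
    constructor
    · rintro ⟨⟨_, hc⟩, h1, h2⟩; exact ⟨⟨h1, h2⟩, hc⟩
    · rintro ⟨⟨h1, h2⟩, hc⟩; exact ⟨⟨h1.trans hB.1, hc⟩, h1, h2⟩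
  rw [hfil, Finset.card_powersetCard]
  have hcards : (B ∩ B').card + (B ∪ B').card = m + m := by
    rw [Finset.card_inter_add_card_union, hB.2, hB'.2]
  by_cases heq : B = B'
  · subst heq
    rw [if_pos rfl, Finset.inter_self, hB.2]
    rw [Nat.choose_symm (by omega : 1 ≤ m), Nat.choose_one_right]
  · rw [if_neg heq]
    have hne : (B ∪ B').card ≠ m := by
      intro hc
      apply heq
      have h1 : B = B ∪ B' := Finset.eq_of_subset_of_card_le Finset.subset_union_left
        (by omega)
      have h2 : B' = B ∪ B' := Finset.eq_of_subset_of_card_le Finset.subset_union_right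
        (by rw [hc, hB'.2])
      rw [h1, ← h2]
    by_cases hc : (B ∪ B').card = m + 1
    · rw [if_pos hc]
      have : (B ∩ B').card = m - 1 := by omega
      rw [this, Nat.choose_self]
    · rw [if_neg hc]
      have hlt : (B ∪ B').card ≥ m + 2 := by
        have : B ⊆ B ∪ B' := Finset.subset_union_left
        have := Finset.card_le_card this
        omega
      exact Nat.choose_eq_zero_of_lt (by omega)

lemma expand_sq (P Q : Finset (Finset ℕ)) (f : Finset ℕ → ℚ)
    (rel : Finset ℕ → Finset ℕ → Prop) [DecidableRel rel] :
    ∑ C ∈ Q, (∑ B ∈ P.filter (fun B => rel B C), f B)^2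
      = ∑ B ∈ P, ∑ B' ∈ P, f B * f B' *
          ((Q.filter (fun C => rel B C ∧ rel B' C)).card : ℚ) := by
  have step1 : ∀ C, (∑ B ∈ P.filter (fun B => rel B C), f B)^2
      = ∑ B ∈ P, ∑ B' ∈ P, if rel B C ∧ rel B' C then f B * f B' else 0 := by
    intro C
    rw [sq, Finset.sum_mul_sum, Finset.sum_filter]
    apply Finset.sum_congr rfl
    intro B _
    by_cases h : rel B C
    · rw [if_pos h, Finset.sum_filter]
      apply Finset.sum_congr rfl
      intro B' _
      by_cases h' : rel B' C
      · rw [if_pos h', if_pos ⟨h, h'⟩]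
      · rw [if_neg h', if_neg (fun hc => h' hc.2)]
    · rw [if_neg h, eq_comm]
      exact Finset.sum_eq_zero (fun B' _ => if_neg (fun hc => h hc.1))
  calc ∑ C ∈ Q, (∑ B ∈ P.filter (fun B => rel B C), f B)^2
      = ∑ C ∈ Q, ∑ B ∈ P, ∑ B' ∈ P, if rel B C ∧ rel B' C then f B * f B' else 0 :=
        Finset.sum_congr rfl (fun C _ => step1 C)
    _ = ∑ B ∈ P, ∑ C ∈ Q, ∑ B' ∈ P, if rel B C ∧ rel B' C then f B * f B' else 0 :=
        Finset.sum_comm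
    _ = ∑ B ∈ P, ∑ B' ∈ P, ∑ C ∈ Q, if rel B C ∧ rel B' C then f B * f B' else 0 :=
        Finset.sum_congr rfl (fun B _ => Finset.sum_comm)
    _ = ∑ B ∈ P, ∑ B' ∈ P, f B * f B' *
          ((Q.filter (fun C => rel B C ∧ rel B' C)).card : ℚ) := by
        apply Finset.sum_congr rfl; intro B _
        apply Finset.sum_congr rfl; intro B' _
        rw [← Finset.sum_filter, Finset.sum_const, nsmul_eq_mul, mul_comm]

lemma down_inj (G : Finset ℕ) (m : ℕ) (hm : 1 ≤ m) (hv : G.card < 2*m) (f : Finset ℕ → ℚ)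
    (hf : ∀ T ∈ G.powersetCard (m-1),
      ∑ B ∈ (G.powersetCard m).filter (fun B => T ⊆ B), f B = 0) :
    ∀ B ∈ G.powersetCard m, f B = 0 := by
  set P := G.powersetCard m with hP
  have hA' : ∑ T ∈ G.powersetCard (m-1), (∑ B ∈ P.filter (fun B => T ⊆ B), f B)^2 = 0 :=
    Finset.sum_eq_zero (fun T hT => by rw [hf T hT]; ring)
  have eA' := expand_sq P (G.powersetCard (m-1)) f (fun B T => T ⊆ B)
  have eA := expand_sq P (G.powersetCard (m+1)) f (fun B C => B ⊆ C)
  have hptwise : ∀ B ∈ P, ∀ B' ∈ P,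
      f B * f B' * (((G.powersetCard (m+1)).filter (fun C => B ⊆ C ∧ B' ⊆ C)).card : ℚ)
      = f B * f B' * (((G.powersetCard (m-1)).filter (fun T => T ⊆ B ∧ T ⊆ B')).card : ℚ)
        + (if B = B' then f B * f B' * ((G.card : ℚ) - 2*m) else 0) := by
    intro B hB B' hB'
    rw [countN G m B B' hB hB', countM G m hm B B' hB hB']
    have hmG : m ≤ G.card := by
      rw [Finset.mem_powersetCard] at hB
      have := Finset.card_le_card hB.1
      omega
    by_cases heq : B = B'
    · rw [if_pos heq, if_pos heq, if_pos heq]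
      push_cast [Nat.cast_sub hmG]
      ring
    · rw [if_neg heq, if_neg heq, if_neg heq, add_zero]
  have hAA : ∑ C ∈ G.powersetCard (m+1), (∑ B ∈ P.filter (fun B => B ⊆ C), f B)^2
      = ((G.card : ℚ) - 2*m) * ∑ B ∈ P, (f B)^2 := by
    rw [eA]
    have : ∑ B ∈ P, ∑ B' ∈ P,
        f B * f B' * (((G.powersetCard (m+1)).filter (fun C => B ⊆ C ∧ B' ⊆ C)).card : ℚ)
        = ∑ B ∈ P, ∑ B' ∈ P,
          (f B * f B' * (((G.powersetCard (m-1)).filter (fun T => T ⊆ B ∧ T ⊆ B')).card : ℚ)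
            + (if B = B' then f B * f B' * ((G.card : ℚ) - 2*m) else 0)) := by
      apply Finset.sum_congr rfl; intro B hB
      apply Finset.sum_congr rfl; intro B' hB'
      exact hptwise B hB B' hB'
    rw [this]
    rw [Finset.sum_congr rfl (fun B _ => Finset.sum_add_distrib)]
    rw [Finset.sum_add_distrib, ← eA', hA', zero_add]
    rw [Finset.mul_sum]
    apply Finset.sum_congr rfl
    intro B hB
    rw [Finset.sum_ite_eq P B (fun B' => f B * f B' * ((G.card : ℚ) - 2*m)), if_pos hB]
    ring
  have hApos : 0 ≤ ∑ C ∈ G.powersetCard (m+1), (∑ B ∈ P.filter (fun B => B ⊆ C), f B)^2 :=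
    Finset.sum_nonneg (fun C _ => sq_nonneg _)
  have hs : 0 ≤ ∑ B ∈ P, (f B)^2 := Finset.sum_nonneg (fun B _ => sq_nonneg _)
  have hneg : ((G.card : ℚ) - 2*m) < 0 := by
    have : (G.card : ℚ) < 2*m := by exact_mod_cast hv
    linarith
  have hzero : ∑ B ∈ P, (f B)^2 = 0 := by
    rcases lt_or_eq_of_le hs with h | h
    · exfalso
      have : ((G.card : ℚ) - 2*m) * ∑ B ∈ P, (f B)^2 < 0 := mul_neg_of_neg_of_pos hneg h
      rw [← hAA] at this
      linarith
    · exact h.symm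
  intro B hB
  have := (Finset.sum_eq_zero_iff_of_nonneg (fun B _ => sq_nonneg (f B))).1 hzero B hB
  exact pow_eq_zero_iff (by norm_num) |>.1 this

def PP (S : Finset ℕ) (p : ℕ) : Prop := p ≤ (S ∩ Finset.Icc 1 (2*p-1)).card

instance (S : Finset ℕ) : DecidablePred (PP S) := fun _ => by unfold PP; infer_instance

def mu (S : Finset ℕ) : ℕ := Nat.findGreatest (PP S) S.card

lemma PP_le_mu {S : Finset ℕ} {p : ℕ} (hp : PP S p) : p ≤ mu S :=
  Nat.le_findGreatest (le_trans hp (Finset.card_le_card Finset.inter_subset_left)) hp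

lemma mu_spec {S : Finset ℕ} (h : 0 < mu S) : PP S (mu S) := by
  have := (Nat.findGreatest_eq_iff (m := Nat.findGreatest (PP S) S.card)).1 rfl
  rw [mu] at h ⊢
  exact this.2.1 (by omega)

lemma good_of_mu_zero (n k : ℕ) (S : Finset ℕ) (hsub : S ⊆ Finset.Icc 1 n)
    (hcard : S.card ≤ k) (hmu : mu S = 0) : goodS n k S := by
  refine ⟨hsub, hcard, ?_⟩
  intro j hj
  by_contra hc
  push_neg at hc
  set c := (S.filter fun a => a ≤ j).card with hcdef
  have hc1 : 1 ≤ c := Finset.card_pos.2 ⟨j, Finset.mem_filter.2 ⟨hj, le_refl j⟩⟩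
  have hsubf : S.filter (fun a => a ≤ j) ⊆ S ∩ Finset.Icc 1 (2*c-1) := by
    intro a ha
    rw [Finset.mem_filter] at ha
    rw [Finset.mem_inter, Finset.mem_Icc]
    have h1 : 1 ≤ a := (Finset.mem_Icc.1 (hsub ha.1)).1
    exact ⟨ha.1, h1, by omega⟩
  have hPP : PP S c := le_trans (le_of_eq rfl) (Finset.card_le_card hsubf)
  have := PP_le_mu hPP
  omega

noncomputable def Vsp (n k : ℕ) : Submodule ℚ (MvPolynomial (Fin n) ℚ ⧸ Jid n k) :=
  Submodule.span ℚ
    {q : MvPolynomial (Fin n) ℚ ⧸ Jid n k | ∃ S : Finset ℕ, goodS n k S ∧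
      q = Ideal.Quotient.mk (Jid n k) (∏ j ∈ S, yP n j)}

lemma main_lemma (n k : ℕ) (h : 2 * k ≤ n) :
    ∀ N : ℕ, ∀ S : Finset ℕ, mu S ≤ N → S ⊆ Finset.Icc 1 n →
      Ideal.Quotient.mk (Jid n k) (∏ j ∈ S, yP n j) ∈ Vsp n k := by
  have easy : ∀ S : Finset ℕ, S ⊆ Finset.Icc 1 n → S.card ≤ k → mu S = 0 →
      Ideal.Quotient.mk (Jid n k) (∏ j ∈ S, yP n j) ∈ Vsp n k := by
    intro S hsub hcard hmu
    exact Submodule.subset_span ⟨S, good_of_mu_zero n k S hsub hcard hmu, rfl⟩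
  have big : ∀ S : Finset ℕ, S ⊆ Finset.Icc 1 n → k + 1 ≤ S.card →
      Ideal.Quotient.mk (Jid n k) (∏ j ∈ S, yP n j) ∈ Vsp n k := by
    intro S hsub hcard
    rw [Ideal.Quotient.eq_zero_iff_mem.2 (big_mem n k S hsub hcard)]
    exact Submodule.zero_mem _
  intro N
  induction N with
  | zero =>
    intro S hmu hsub
    rcases le_or_gt S.card k with hcd | hcd
    · exact easy S hsub hcd (Nat.le_zero.1 hmu)
    · exact big S hsub hcd
  | succ N ih =>
    intro S hmu hsub
    rcases Nat.lt_or_ge k S.card with hcd | hcd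
    · exact big S hsub hcd
    by_cases hmu' : mu S ≤ N
    · exact ih S hmu' hsub
    set m := N + 1 with hmdef
    have hmuS : mu S = m := le_antisymm hmu (by omega)
    set G := Finset.Icc 1 (2*m-1) with hG
    set U := S \ G with hU
    set B := S ∩ G with hB
    have hm1 : 1 ≤ m := Nat.le_add_left 1 N
    have hPm : PP S m := by rw [← hmuS]; exact mu_spec (by omega)
    have hPm' : m ≤ B.card := hPm
    have hnotPP : ∀ p, m < p → ¬ PP S p := fun p hp hPP => by
      have := PP_le_mu hPP; omega
    have hBcard : B.card = m := by
      by_contra hne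
      have h2 : m + 1 ≤ B.card := by omega
      have hPP1 : PP S (m+1) := by
        show m + 1 ≤ (S ∩ Finset.Icc 1 (2*(m+1)-1)).card
        calc m + 1 ≤ B.card := h2
          _ ≤ (S ∩ Finset.Icc 1 (2*(m+1)-1)).card := Finset.card_le_card
              (Finset.inter_subset_inter (le_refl S)
                (Finset.Icc_subset_Icc (le_refl 1) (by omega)))
      have := PP_le_mu hPP1
      omega
    have hGsub : G ⊆ Finset.Icc 1 n := by
      rw [hG]
      apply Finset.Icc_subset_Icc (le_refl 1)
      have hmS : m ≤ S.card := le_trans hPm' (Finset.card_le_card Finset.inter_subset_left)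
      omega
    have hUG : ∀ x ∈ U, x ∉ G := fun x hx => (Finset.mem_sdiff.1 hx).2
    have hUsub : U ⊆ Finset.Icc 1 n := fun x hx => hsub (Finset.mem_sdiff.1 hx).1
    have hcardG : G.card = 2*m-1 := by rw [hG, Nat.card_Icc]; omega
    by_contra hnot
    set x : (MvPolynomial (Fin n) ℚ ⧸ Jid n k) ⧸ Vsp n k :=
      Submodule.Quotient.mk (Ideal.Quotient.mk (Jid n k) (∏ j ∈ S, yP n j)) with hxdef
    have hx : x ≠ 0 := by
      rw [hxdef, Ne, Submodule.Quotient.mk_eq_zero]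
      exact hnot
    have hker : LinearMap.ker (LinearMap.toSpanSingleton ℚ _ x) = ⊥ := by
      apply LinearMap.ker_eq_bot'.2
      intro c hc
      rw [LinearMap.toSpanSingleton_apply] at hc
      by_contra hc0
      exact hx (by rw [← one_smul ℚ x, ← inv_mul_cancel₀ hc0, mul_smul, hc, smul_zero])
    obtain ⟨g, hg⟩ := (LinearMap.toSpanSingleton ℚ _ x).exists_leftInverse_of_injective hker
    set φ : (MvPolynomial (Fin n) ℚ ⧸ Jid n k) →ₗ[ℚ] ℚ := g.comp (Vsp n k).mkQ with hφ
    have hφV : ∀ v ∈ Vsp n k, φ v = 0 := by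
      intro v hv
      rw [hφ, LinearMap.comp_apply, Submodule.mkQ_apply,
        (Submodule.Quotient.mk_eq_zero _).2 hv, map_zero]
    have hφS : φ (Ideal.Quotient.mk (Jid n k) (∏ j ∈ S, yP n j)) = 1 := by
      have hg1 := LinearMap.congr_fun hg 1
      rw [LinearMap.comp_apply, LinearMap.toSpanSingleton_apply, one_smul,
        LinearMap.id_apply] at hg1
      rw [hφ, LinearMap.comp_apply, Submodule.mkQ_apply]
      exact hg1
    set f : Finset ℕ → ℚ :=
      fun B' => φ (Ideal.Quotient.mk (Jid n k) (∏ j ∈ B' ∪ U, yP n j)) with hf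
    have hfhyp : ∀ T ∈ G.powersetCard (m-1),
        ∑ B' ∈ (G.powersetCard m).filter (fun B' => T ⊆ B'), f B' = 0 := by
      intro T hT
      rw [Finset.mem_powersetCard] at hT
      obtain ⟨hTG, hTcard⟩ := hT
      have hTU : T ∪ U ⊆ Finset.Icc 1 n := Finset.union_subset (hTG.trans hGsub) hUsub
      have hrel := rel_mem n k (T ∪ U) hTU
      set bigs := (Finset.Icc 1 n \ G) \ U with hbigs
      have hsplit : Finset.Icc 1 n \ (T ∪ U) = (G \ T) ∪ bigs := by
        ext y
        simp only [hbigs, Finset.mem_sdiff, Finset.mem_union]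
        constructor
        · rintro ⟨hy, hnot2⟩
          rw [not_or] at hnot2
          by_cases hyG : y ∈ G
          · exact Or.inl ⟨hyG, hnot2.1⟩
          · exact Or.inr ⟨⟨hy, hyG⟩, hnot2.2⟩
        · rintro (⟨hyG, hyT⟩ | ⟨⟨hy, hyG⟩, hyU⟩)
          · exact ⟨hGsub hyG, not_or.2 ⟨hyT, fun hyU => hUG y hyU hyG⟩⟩
          · exact ⟨hy, not_or.2 ⟨fun hyT => hyG (hTG hyT), hyU⟩⟩
      have hdisj : Disjoint (G \ T) bigs := by
        rw [Finset.disjoint_left]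
        intro y hy1 hy2
        rw [hbigs, Finset.mem_sdiff, Finset.mem_sdiff] at hy2
        exact hy2.1.2 (Finset.mem_sdiff.1 hy1).1
      rw [hsplit, Finset.sum_union hdisj] at hrel
      have hreindex : (∑ i ∈ G \ T, ∏ j ∈ insert i (T ∪ U), yP n j)
          = ∑ B' ∈ (G.powersetCard m).filter (fun B' => T ⊆ B'), ∏ j ∈ B' ∪ U, yP n j := by
        apply Finset.sum_bij (fun i _ => insert i T)
        · intro i hi
          rw [Finset.mem_sdiff] at hi
          rw [Finset.mem_filter, Finset.mem_powersetCard]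
          refine ⟨⟨Finset.insert_subset hi.1 hTG, ?_⟩, Finset.subset_insert _ _⟩
          rw [Finset.card_insert_of_notMem hi.2, hTcard]
          omega
        · intro i hi i' hi' heq
          rw [Finset.mem_sdiff] at hi hi'
          have hmem : i ∈ insert i' T := heq ▸ Finset.mem_insert_self i T
          rcases Finset.mem_insert.1 hmem with h' | h'
          · exact h'
          · exact absurd h' hi.2
        · intro B' hB'
          rw [Finset.mem_filter, Finset.mem_powersetCard] at hB'
          obtain ⟨⟨hB'G, hB'card⟩, hTB'⟩ := hB'
          have hcard1 : (B' \ T).card = 1 := by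
            rw [Finset.card_sdiff_of_subset hTB', hB'card, hTcard]
            omega
          obtain ⟨i, hi⟩ := Finset.card_eq_one.1 hcard1
          have hiB' : i ∈ B' \ T := hi ▸ Finset.mem_singleton_self i
          rw [Finset.mem_sdiff] at hiB'
          refine ⟨i, Finset.mem_sdiff.2 ⟨hB'G hiB'.1, hiB'.2⟩, ?_⟩
          have hBT := Finset.sdiff_union_of_subset hTB'
          rw [hi] at hBT
          rw [Finset.insert_eq]
          exact hBT
        · intro i hi
          rw [Finset.insert_union]
      rw [hreindex] at hrel
      have hmk : (∑ B' ∈ (G.powersetCard m).filter (fun B' => T ⊆ B'),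
            Ideal.Quotient.mk (Jid n k) (∏ j ∈ B' ∪ U, yP n j))
          + ∑ i ∈ bigs, Ideal.Quotient.mk (Jid n k) (∏ j ∈ insert i (T ∪ U), yP n j) = 0 := by
        rw [← map_sum, ← map_sum, ← map_add, Ideal.Quotient.eq_zero_iff_mem]
        exact hrel
      have hbigmem : ∀ i ∈ bigs,
          Ideal.Quotient.mk (Jid n k) (∏ j ∈ insert i (T ∪ U), yP n j) ∈ Vsp n k := by
        intro i hi
        rw [hbigs, Finset.mem_sdiff, Finset.mem_sdiff] at hi
        obtain ⟨⟨hiIcc, hiG⟩, hiU⟩ := hi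
        set S'' := insert i (T ∪ U) with hS''
        have hS''sub : S'' ⊆ Finset.Icc 1 n := Finset.insert_subset hiIcc hTU
        have hS''mu : mu S'' ≤ N := by
          by_contra hcon
          push_neg at hcon
          have hmupos : 0 < mu S'' := by omega
          have hPP'' : mu S'' ≤ (S'' ∩ Finset.Icc 1 (2*(mu S'')-1)).card := mu_spec hmupos
          set p := mu S'' with hp
          have hpm : m ≤ p := by omega
          have hIsub : S'' ∩ Finset.Icc 1 (2*p-1)
              ⊆ insert i (T ∪ (U ∩ Finset.Icc 1 (2*p-1))) := by
            intro y hy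
            rw [Finset.mem_inter] at hy
            obtain ⟨hy1, hy2⟩ := hy
            rw [hS'', Finset.mem_insert] at hy1
            rcases hy1 with rfl | hy1
            · exact Finset.mem_insert_self _ _
            · rcases Finset.mem_union.1 hy1 with hyT | hyU
              · exact Finset.mem_insert_of_mem (Finset.mem_union_left _ hyT)
              · exact Finset.mem_insert_of_mem (Finset.mem_union_right _
                  (Finset.mem_inter.2 ⟨hyU, hy2⟩))
          have hcard'' : (S'' ∩ Finset.Icc 1 (2*p-1)).card
              ≤ m + (U ∩ Finset.Icc 1 (2*p-1)).card := by
            calc (S'' ∩ Finset.Icc 1 (2*p-1)).card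
                ≤ (insert i (T ∪ (U ∩ Finset.Icc 1 (2*p-1)))).card :=
                  Finset.card_le_card hIsub
              _ ≤ (T ∪ (U ∩ Finset.Icc 1 (2*p-1))).card + 1 := Finset.card_insert_le _ _
              _ ≤ (T.card + (U ∩ Finset.Icc 1 (2*p-1)).card) + 1 :=
                  Nat.add_le_add_right (Finset.card_union_le _ _) 1
              _ = m + (U ∩ Finset.Icc 1 (2*p-1)).card := by rw [hTcard]; omega
          rcases Nat.eq_or_lt_of_le hpm with hpe | hplt
          · have hsub'' : S'' ∩ Finset.Icc 1 (2*p-1) ⊆ T := by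
              intro y hy
              rw [Finset.mem_inter] at hy
              obtain ⟨hy1, hy2⟩ := hy
              have hyG : y ∈ G := by rw [hG, hpe]; exact hy2
              rw [hS'', Finset.mem_insert] at hy1
              rcases hy1 with rfl | hy1
              · exact absurd hyG hiG
              · rcases Finset.mem_union.1 hy1 with hyT | hyU
                · exact hyT
                · exact absurd hyG (hUG y hyU)
            have hle := Finset.card_le_card hsub''
            rw [hTcard] at hle
            omega
          · have hnotp : ¬ (p ≤ (S ∩ Finset.Icc 1 (2*p-1)).card) := hnotPP p hplt
            have hGIp : G ⊆ Finset.Icc 1 (2*p-1) := by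
              rw [hG]
              exact Finset.Icc_subset_Icc (le_refl 1) (by omega)
            have hSsplit : S ∩ Finset.Icc 1 (2*p-1) = B ∪ (U ∩ Finset.Icc 1 (2*p-1)) := by
              ext y
              simp only [hB, hU, Finset.mem_inter, Finset.mem_union, Finset.mem_sdiff]
              constructor
              · rintro ⟨hyS, hyI⟩
                by_cases hyG : y ∈ G
                · exact Or.inl ⟨hyS, hyG⟩
                · exact Or.inr ⟨⟨hyS, hyG⟩, hyI⟩
              · rintro (⟨hyS, hyG⟩ | ⟨⟨hyS, hyG⟩, hyI⟩)
                · exact ⟨hyS, hGIp hyG⟩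
                · exact ⟨hyS, hyI⟩
            have hdisjBU : Disjoint B (U ∩ Finset.Icc 1 (2*p-1)) := by
              rw [Finset.disjoint_left]
              intro y hy1 hy2
              rw [hB, Finset.mem_inter] at hy1
              exact hUG y (Finset.mem_inter.1 hy2).1 hy1.2
            have hcardS : (S ∩ Finset.Icc 1 (2*p-1)).card
                = m + (U ∩ Finset.Icc 1 (2*p-1)).card := by
              rw [hSsplit, Finset.card_union_of_disjoint hdisjBU, hBcard]
            omega
        exact ih S'' hS''mu hS''sub
      have hsum_mem : (∑ B' ∈ (G.powersetCard m).filter (fun B' => T ⊆ B'),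
          Ideal.Quotient.mk (Jid n k) (∏ j ∈ B' ∪ U, yP n j)) ∈ Vsp n k := by
        rw [eq_neg_of_add_eq_zero_left hmk]
        exact Submodule.neg_mem _ (Submodule.sum_mem _ hbigmem)
      simp only [hf]
      rw [← map_sum]
      exact hφV _ hsum_mem
    have hfB := down_inj G m hm1 (by omega) f hfhyp B
      (Finset.mem_powersetCard.2 ⟨Finset.inter_subset_right, hBcard⟩)
    simp only [hf] at hfB
    have hBU : B ∪ U = S := by
      rw [hB, hU, Finset.union_comm]
      exact Finset.sdiff_union_inter S G
    rw [hBU, hφS] at hfB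
    exact one_ne_zero hfB

/-- The classes of the squarefree monomials `x_S`, for `S` the bottom row of a
standard tableau on `(n-ℓ,ℓ)` with `0 ≤ ℓ ≤ k`, span `ℚ[x₁,…,xₙ]/J` over `ℚ`. -/
theorem quotientJ_spanned_by_tableau_monomials (n k : ℕ) (h : 2 * k ≤ n) :
    Submodule.span ℚ
        {q : MvPolynomial (Fin n) ℚ ⧸ Jid n k | ∃ S : Finset ℕ, goodS n k S ∧
          q = Ideal.Quotient.mk (Jid n k) (∏ j ∈ S, yP n j)} = ⊤ := by
  rw [eq_top_iff]
  rintro q -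
  obtain ⟨p, rfl⟩ := Ideal.Quotient.mk_surjective q
  show Ideal.Quotient.mk (Jid n k) p ∈ Vsp n k
  induction p using MvPolynomial.induction_on' with
  | add p q hp hq =>
    rw [map_add]
    exact Submodule.add_mem _ hp hq
  | monomial d a =>
    have hsm : (MvPolynomial.monomial d) a = a • (MvPolynomial.monomial d) (1:ℚ) := by
      rw [MvPolynomial.smul_monomial, smul_eq_mul, mul_one]
    have hmap : Ideal.Quotient.mk (Jid n k) ((MvPolynomial.monomial d) a)
        = a • Ideal.Quotient.mk (Jid n k) ((MvPolynomial.monomial d) (1:ℚ)) := by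
      rw [hsm, ← Ideal.Quotient.mkₐ_eq_mk ℚ (Jid n k), map_smul]
    rw [hmap]
    apply Submodule.smul_mem
    by_cases hsq : ∃ i, 2 ≤ d i
    · -- not squarefree: monomial lies in the ideal
      obtain ⟨i, hi⟩ := hsq
      have hmem : (MvPolynomial.monomial d) (1:ℚ) ∈ Jid n k := by
        have hle : Finsupp.single i 2 ≤ d := by
          rw [Finsupp.single_le_iff]; exact hi
        have heq : (MvPolynomial.monomial (d - Finsupp.single i 2)) (1:ℚ)
            * (MvPolynomial.X i) ^ 2 = (MvPolynomial.monomial d) (1:ℚ) := by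
          rw [MvPolynomial.X_pow_eq_monomial, MvPolynomial.monomial_mul, mul_one]
          congr 1
          rw [tsub_add_cancel_of_le hle]
        rw [← heq]
        apply Ideal.mul_mem_left
        have := gen_sq_mem n k ((i : ℕ) + 1) (Nat.le_add_left _ _) i.2
        rwa [yP_fin] at this
      rw [Ideal.Quotient.eq_zero_iff_mem.2 hmem]
      exact Submodule.zero_mem _
    · -- squarefree
      push_neg at hsq
      set S : Finset ℕ := d.support.image (fun i : Fin n => (i : ℕ) + 1) with hS
      have hinj : Set.InjOn (fun i : Fin n => (i : ℕ) + 1) d.support := by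
        intro a _ b _ hab
        simp only at hab
        exact Fin.ext (by omega)
      have hSsub : S ⊆ Finset.Icc 1 n := by
        intro j hj
        rw [hS, Finset.mem_image] at hj
        obtain ⟨i, _, rfl⟩ := hj
        rw [Finset.mem_Icc]
        exact ⟨Nat.le_add_left _ _, i.2⟩
      have hprod : (∏ j ∈ S, yP n j) = (MvPolynomial.monomial d) (1:ℚ) := by
        rw [hS, Finset.prod_image hinj]
        rw [MvPolynomial.monomial_eq, map_one, one_mul]
        rw [Finsupp.prod]
        apply Finset.prod_congr rfl
        intro i hi
        have h1 : d i = 1 := by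
          have := hsq i
          have h0 : d i ≠ 0 := Finsupp.mem_support_iff.1 hi
          omega
        rw [yP_fin, h1, pow_one]
      rw [← hprod]
      exact main_lemma n k h (mu S) S (le_refl _) hSsub
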